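/- Let μ be a measure on ℝ with finite moments, N ≥ 1, h(t) = t^N, dμ₀ = t^N dμ, and let B be a symmetric bilinear form on ℝ[t] with B(t^N f, g) = B(f, t^N g) = ∫ fg dμ₀. If the matrix (B(t^i,t^j) − ∫ t^{i+j} dμ)_{i,j=0}^{N−1}, conjugated by the diagonal matrix diag(1/0!,…,1/(N−1)!), is diagonal with entries M_0,…,M_{N−1}, then B(f,g) = ∫ fg dμ + Σ_{k=0}^{N−1} M_k f^{(k)}(0) g^{(k)}(0) for all polynomials f, g. -/
import Mathlib


open Polynomial MeasureTheory

private lemma eval0_iter_deriv (k n : ℕ) :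
    ((Polynomial.derivative^[k]) ((X : Polynomial ℝ) ^ n)).eval 0
      = if n = k then (Nat.factorial k : ℝ) else 0 := by
  rw [Polynomial.iterate_derivative_X_pow_eq_smul]
  rcases lt_trichotomy n k with h | h | h
  · simp [Nat.descFactorial_eq_zero_iff_lt.mpr h, h.ne]
  · subst h
    simp [Nat.descFactorial_self]
  · rw [if_neg h.ne']
    simp [zero_pow (Nat.sub_ne_zero_of_lt h)]

private lemma iter_deriv_add (k : ℕ) (p q : Polynomial ℝ) :
    Polynomial.derivative^[k] (p + q)
      = Polynomial.derivative^[k] p + Polynomial.derivative^[k] q := by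
  induction k generalizing p q with
  | zero => simp
  | succ k ih => simp [Function.iterate_succ_apply, derivative_add, ih]

noncomputable def sobolevRhs (μ : Measure ℝ) (N : ℕ) (M : Fin N → ℝ)
    (f g : Polynomial ℝ) : ℝ :=
  (∫ t, f.eval t * g.eval t ∂μ) +
    ∑ k : Fin N, M k * (Polynomial.derivative^[(k : ℕ)] f).eval 0 *
      (Polynomial.derivative^[(k : ℕ)] g).eval 0

theorem geronimus_tN_diagonal_sobolev (N : ℕ) (hN : 1 ≤ N) (μ : Measure ℝ)
    (hint : ∀ f : Polynomial ℝ, Integrable (fun t => f.eval t) μ)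
    (B : Polynomial ℝ →ₗ[ℝ] Polynomial ℝ →ₗ[ℝ] ℝ)
    (hsym : ∀ f g, B f g = B g f)
    (hB : ∀ f g, B ((X : Polynomial ℝ) ^ N * f) g = ∫ t, f.eval t * g.eval t * t ^ N ∂μ)
    (hB' : ∀ f g, B f ((X : Polynomial ℝ) ^ N * g) = ∫ t, f.eval t * g.eval t * t ^ N ∂μ)
    (M : Fin N → ℝ)
    (hoffdiag : ∀ i j : Fin N, i ≠ j →
      B (X ^ (i : ℕ)) (X ^ (j : ℕ)) = ∫ t, t ^ ((i : ℕ) + (j : ℕ)) ∂μ)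
    (hM : ∀ k : Fin N,
      B (X ^ (k : ℕ)) (X ^ (k : ℕ)) - (∫ t, t ^ (2 * (k : ℕ)) ∂μ)
        = ((Nat.factorial (k : ℕ) : ℝ)) ^ 2 * M k) :
    ∀ f g : Polynomial ℝ,
      B f g = (∫ t, f.eval t * g.eval t ∂μ) +
        ∑ k : Fin N, M k * (Polynomial.derivative^[(k : ℕ)] f).eval 0 *
          (Polynomial.derivative^[(k : ℕ)] g).eval 0 := by
  have hint2 : ∀ f g : Polynomial ℝ, Integrable (fun t => f.eval t * g.eval t) μ := by
    intro f g
    simpa using hint (f * g)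
  -- additivity of the RHS
  have Radd_right : ∀ f g1 g2, sobolevRhs μ N M f (g1 + g2)
      = sobolevRhs μ N M f g1 + sobolevRhs μ N M f g2 := by
    intro f g1 g2
    unfold sobolevRhs
    rw [show (fun t => f.eval t * (g1 + g2).eval t)
        = fun t => f.eval t * g1.eval t + f.eval t * g2.eval t from
        funext fun t => by simp [eval_add]; ring,
      integral_add (hint2 f g1) (hint2 f g2)]
    simp only [iter_deriv_add, eval_add, mul_add]
    rw [Finset.sum_add_distrib]
    ring
  have Radd_left : ∀ f1 f2 g, sobolevRhs μ N M (f1 + f2) g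
      = sobolevRhs μ N M f1 g + sobolevRhs μ N M f2 g := by
    intro f1 f2 g
    unfold sobolevRhs
    rw [show (fun t => (f1 + f2).eval t * g.eval t)
        = fun t => f1.eval t * g.eval t + f2.eval t * g.eval t from
        funext fun t => by simp [eval_add]; ring,
      integral_add (hint2 f1 g) (hint2 f2 g)]
    simp only [iter_deriv_add, eval_add, add_mul, mul_add]
    rw [Finset.sum_add_distrib]
    ring
  have Rsmul_right : ∀ (a : ℝ) f g, sobolevRhs μ N M f (C a * g)
      = a * sobolevRhs μ N M f g := by
    intro a f g
    unfold sobolevRhs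
    rw [show (fun t => f.eval t * (C a * g).eval t)
        = fun t => a * (f.eval t * g.eval t) from funext fun t => by simp; ring,
      integral_const_mul]
    simp only [Polynomial.iterate_derivative_C_mul, eval_mul, eval_C]
    rw [mul_add, Finset.mul_sum]
    refine congrArg₂ (· + ·) rfl ?_
    exact Finset.sum_congr rfl fun k _ => by ring
  have Rsmul_left : ∀ (a : ℝ) f g, sobolevRhs μ N M (C a * f) g
      = a * sobolevRhs μ N M f g := by
    intro a f g
    unfold sobolevRhs
    rw [show (fun t => (C a * f).eval t * g.eval t)
        = fun t => a * (f.eval t * g.eval t) from funext fun t => by simp; ring,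
      integral_const_mul]
    simp only [Polynomial.iterate_derivative_C_mul, eval_mul, eval_C]
    rw [mul_add, Finset.mul_sum]
    refine congrArg₂ (· + ·) rfl ?_
    exact Finset.sum_congr rfl fun k _ => by ring
  -- monomial case
  have hmono : ∀ m n : ℕ, B (X ^ m) (X ^ n) = sobolevRhs μ N M (X ^ m) (X ^ n) := by
    intro m n
    have hsum : ∑ k : Fin N, M k * (Polynomial.derivative^[(k : ℕ)] ((X : Polynomial ℝ) ^ m)).eval 0 *
        (Polynomial.derivative^[(k : ℕ)] ((X : Polynomial ℝ) ^ n)).eval 0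
        = ∑ k : Fin N, M k * (if m = (k : ℕ) then (Nat.factorial m : ℝ) else 0) *
            (if n = (k : ℕ) then (Nat.factorial n : ℝ) else 0) := by
      refine Finset.sum_congr rfl fun k _ => ?_
      rw [eval0_iter_deriv, eval0_iter_deriv]
      rcases eq_or_ne m (k : ℕ) with h | h
      · rcases eq_or_ne n (k : ℕ) with h' | h' <;> simp [h, h']
      · simp [h]
    by_cases hm : N ≤ m
    · -- m ≥ N : all derivative terms vanish
      have h1 : (X : Polynomial ℝ) ^ m = X ^ N * X ^ (m - N) := by
        rw [← pow_add, Nat.add_sub_cancel' hm]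
      have hBv := hB (X ^ (m - N) : Polynomial ℝ) (X ^ n)
      rw [← h1] at hBv
      rw [hBv]
      unfold sobolevRhs
      rw [hsum]
      have hz : ∑ k : Fin N, M k * (if m = (k : ℕ) then (Nat.factorial m : ℝ) else 0) *
          (if n = (k : ℕ) then (Nat.factorial n : ℝ) else 0) = 0 := by
        refine Finset.sum_eq_zero fun k _ => ?_
        have : m ≠ (k : ℕ) := by have := k.isLt; omega
        simp [this]
      rw [hz, add_zero]
      congr 1
      funext t
      simp only [eval_pow, eval_X, ← pow_add]
      congr 1
      omega
    · push_neg at hm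
      by_cases hn : N ≤ n
      · have h1 : (X : Polynomial ℝ) ^ n = X ^ N * X ^ (n - N) := by
          rw [← pow_add, Nat.add_sub_cancel' hn]
        have hBv := hB' (X ^ m : Polynomial ℝ) (X ^ (n - N))
        rw [← h1] at hBv
        rw [hBv]
        unfold sobolevRhs
        rw [hsum]
        have hz : ∑ k : Fin N, M k * (if m = (k : ℕ) then (Nat.factorial m : ℝ) else 0) *
            (if n = (k : ℕ) then (Nat.factorial n : ℝ) else 0) = 0 := by
          refine Finset.sum_eq_zero fun k _ => ?_
          have : n ≠ (k : ℕ) := by have := k.isLt; omega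
          simp [this]
        rw [hz, add_zero]
        congr 1
        funext t
        simp only [eval_pow, eval_X, ← pow_add]
        congr 1
        omega
      · push_neg at hn
        rcases eq_or_ne m n with h | h
        · subst h
          have hd := hM ⟨m, hm⟩
          simp only at hd
          unfold sobolevRhs
          rw [hsum]
          have hs : ∑ k : Fin N, M k * (if m = (k : ℕ) then (Nat.factorial m : ℝ) else 0) *
              (if m = (k : ℕ) then (Nat.factorial m : ℝ) else 0)
              = (Nat.factorial m : ℝ) ^ 2 * M ⟨m, hm⟩ := by
            rw [Finset.sum_eq_single (⟨m, hm⟩ : Fin N)]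
            · simp; ring
            · intro k _ hk
              have : m ≠ (k : ℕ) := fun hc => hk (by ext; simp [hc.symm])
              simp [this]
            · simp
          rw [hs]
          have h2 : ∫ t, (X ^ m : Polynomial ℝ).eval t * (X ^ m : Polynomial ℝ).eval t ∂μ
              = ∫ t, t ^ (2 * m) ∂μ := by
            congr 1; funext t; simp [← pow_add, two_mul]
          rw [h2]
          linarith
        · have hod := hoffdiag ⟨m, hm⟩ ⟨n, hn⟩ (by simp [Fin.ext_iff, h])
          simp only at hod
          rw [hod]
          unfold sobolevRhs
          rw [hsum]
          have hs : ∑ k : Fin N, M k * (if m = (k : ℕ) then (Nat.factorial m : ℝ) else 0) *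
              (if n = (k : ℕ) then (Nat.factorial n : ℝ) else 0) = 0 := by
            refine Finset.sum_eq_zero fun k _ => ?_
            rcases eq_or_ne m (k : ℕ) with hmk | hmk
            · have : n ≠ (k : ℕ) := by omega
              simp [this]
            · simp [hmk]
          rw [hs, add_zero]
          congr 1
          funext t
          simp [pow_add]
  -- extend to general g
  have hmonog : ∀ (m : ℕ) (g : Polynomial ℝ),
      B (X ^ m) g = sobolevRhs μ N M (X ^ m) g := by
    intro m g
    induction g using Polynomial.induction_on' with
    | add p q hp hq =>
      rw [map_add, Radd_right, hp, hq]
    | monomial n a =>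
      have h1 : (monomial n a : Polynomial ℝ) = a • (X ^ n) := by
        rw [← C_mul_X_pow_eq_monomial, smul_eq_C_mul]
      rw [h1, LinearMap.map_smul, smul_eq_mul, smul_eq_C_mul, Rsmul_right, hmono]
  -- extend to general f
  intro f g
  show B f g = sobolevRhs μ N M f g
  induction f using Polynomial.induction_on' with
  | add p q hp hq =>
    rw [map_add, LinearMap.add_apply, Radd_left, hp, hq]
  | monomial n a =>
    have h1 : (monomial n a : Polynomial ℝ) = a • (X ^ n) := by
      rw [← C_mul_X_pow_eq_monomial, smul_eq_C_mul]
    rw [h1, LinearMap.map_smul, LinearMap.smul_apply, smul_eq_mul, smul_eq_C_mul, Rsmul_left, hmonog]
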